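/- Let μ be a probability measure on ℝ^d and let x₁, …, x_K be distinct points of ℝ^d. Then the minimum over probability vectors a ∈ Σ_K of W₂²(μ, ∑ₖ aₖ δ_{xₖ}) equals ∫_{ℝ^d} min_{1≤k≤K} ‖xₖ − y‖² dμ(y), and this minimum is attained by the weights aₖ = μ(Uₖ), where (Uₖ)ₖ is a measurable partition of ℝ^d such that y ∈ Uₖ implies ‖xₖ − y‖ = min_j ‖x_j − y‖. -/

import Mathlib

open MeasureTheory Set
open scoped ENNReal

/-- Squared 2-Wasserstein distance (as an extended real), defined as the infimum over
couplings of the integral of the squared distance. -/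
noncomputable def W2sq {E : Type*} [MeasurableSpace E] [PseudoMetricSpace E]
    (μ ν : Measure E) : ℝ≥0∞ :=
  ⨅ π : {π : Measure (E × E) // π.map Prod.fst = μ ∧ π.map Prod.snd = ν},
    ∫⁻ p, ENNReal.ofReal (dist p.1 p.2 ^ 2) ∂(π : Measure (E × E))

namespace Stmt3Aux

lemma map_finset_sum {α β ι : Type*} [MeasurableSpace α] [MeasurableSpace β]
    {f : α → β} (hf : Measurable f) (s : Finset ι) (μ : ι → Measure α) :
    (∑ i ∈ s, μ i).map f = ∑ i ∈ s, (μ i).map f := by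
  induction s using Finset.cons_induction with
  | empty => simp
  | cons i s hi ih => rw [Finset.sum_cons, Finset.sum_cons, Measure.map_add _ _ hf, ih]

variable {d K : ℕ}

lemma cost_meas :
    Measurable (fun p : EuclideanSpace ℝ (Fin d) × EuclideanSpace ℝ (Fin d) =>
      ENNReal.ofReal (dist p.1 p.2 ^ 2)) := by
  fun_prop

lemma f_meas (x : Fin K → EuclideanSpace ℝ (Fin d)) :
    Measurable (fun y => ⨅ k, ENNReal.ofReal (‖x k - y‖ ^ 2)) := by
  apply Measurable.iInf
  intro k
  fun_prop

/-- Lower bound: any coupling between `μ` and a measure supported on the range of `x`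
has cost at least `∫ minₖ ‖xₖ − y‖²`. -/
lemma lower_bound (μ ν : Measure (EuclideanSpace ℝ (Fin d)))
    (x : Fin K → EuclideanSpace ℝ (Fin d)) (hν : ν (Set.range x)ᶜ = 0)
    (π : Measure (EuclideanSpace ℝ (Fin d) × EuclideanSpace ℝ (Fin d)))
    (h1 : π.map Prod.fst = μ) (h2 : π.map Prod.snd = ν) :
    (∫⁻ y, ⨅ k, ENNReal.ofReal (‖x k - y‖ ^ 2) ∂μ) ≤
      ∫⁻ p, ENNReal.ofReal (dist p.1 p.2 ^ 2) ∂π := by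
  have hS : MeasurableSet (Set.range x) := (Set.finite_range x).measurableSet
  have hae : ∀ᵐ p ∂π, p.2 ∈ Set.range x := by
    have h0 : π (Prod.snd ⁻¹' (Set.range x)ᶜ) = 0 := by
      rw [← Measure.map_apply measurable_snd hS.compl, h2]; exact hν
    exact h0
  calc (∫⁻ y, ⨅ k, ENNReal.ofReal (‖x k - y‖ ^ 2) ∂μ)
      = ∫⁻ p, ⨅ k, ENNReal.ofReal (‖x k - p.1‖ ^ 2) ∂π := by
        rw [← h1, lintegral_map (f_meas x) measurable_fst]
    _ ≤ ∫⁻ p, ENNReal.ofReal (dist p.1 p.2 ^ 2) ∂π := by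
        refine lintegral_mono_ae ?_
        filter_upwards [hae] with p hp
        obtain ⟨k, hk⟩ := hp
        calc (⨅ j, ENNReal.ofReal (‖x j - p.1‖ ^ 2))
            ≤ ENNReal.ofReal (‖x k - p.1‖ ^ 2) := iInf_le _ k
          _ = ENNReal.ofReal (dist p.1 p.2 ^ 2) := by
              rw [← hk, dist_eq_norm, norm_sub_rev]

end Stmt3Aux

open Stmt3Aux in
/-- for distinct points `x₁,…,x_K`, the minimum over probability vectors
`a ∈ Σ_K` of `W₂²(μ, ∑ₖ aₖ δ_{xₖ})` equals `∫ minₖ ‖xₖ − y‖² dμ(y)`, and it is attained at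
the weights `aₖ = μ(Uₖ)` for a measurable partition `(Uₖ)` subordinate to the Voronoï cells. -/
theorem stmt_3 {d : ℕ} (K : ℕ) (hK : 0 < K)
    (μ : Measure (EuclideanSpace ℝ (Fin d))) [IsProbabilityMeasure μ]
    (x : Fin K → EuclideanSpace ℝ (Fin d)) (hx : Function.Injective x)
    (U : Fin K → Set (EuclideanSpace ℝ (Fin d)))
    (hUmeas : ∀ k, MeasurableSet (U k))
    (hUcover : (⋃ k, U k) = univ)
    (hUdisj : Pairwise (Function.onFun Disjoint U))
    (hUvor : ∀ k, ∀ y ∈ U k, ∀ j, ‖x k - y‖ ≤ ‖x j - y‖) :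
    (∀ a : Fin K → ℝ, (∀ k, 0 ≤ a k) → (∑ k, a k = 1) →
        (∫⁻ y, ⨅ k, ENNReal.ofReal (‖x k - y‖ ^ 2) ∂μ) ≤
          W2sq μ (∑ k, ENNReal.ofReal (a k) • Measure.dirac (x k))) ∧
      W2sq μ (∑ k, μ (U k) • Measure.dirac (x k)) =
        ∫⁻ y, ⨅ k, ENNReal.ofReal (‖x k - y‖ ^ 2) ∂μ := by
  haveI : Nonempty (Fin K) := ⟨⟨0, hK⟩⟩
  -- sum of restrictions is μ
  have hsum_restrict : (∑ k, μ.restrict (U k)) = μ := by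
    ext s hs
    rw [Measure.finset_sum_apply]
    simp_rw [Measure.restrict_apply hs]
    rw [← tsum_fintype (L := SummationFilter.unconditional _), ← measure_iUnion
      (fun i j hij => ((hUdisj hij).inter_left' s).inter_right' s)
      (fun k => hs.inter (hUmeas k))]
    rw [← Set.inter_iUnion, hUcover, Set.inter_univ]
  -- the generic lower bound, part 1
  have key : ∀ ν : Measure (EuclideanSpace ℝ (Fin d)), ν (Set.range x)ᶜ = 0 →
      (∫⁻ y, ⨅ k, ENNReal.ofReal (‖x k - y‖ ^ 2) ∂μ) ≤ W2sq μ ν := by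
    intro ν hν
    refine le_iInf fun π => lower_bound μ ν x hν π π.2.1 π.2.2
  have hcompl : ∀ c : Fin K → ℝ≥0∞,
      (∑ k, c k • Measure.dirac (x k)) (Set.range x)ᶜ = 0 := by
    intro c
    rw [Measure.finset_sum_apply]
    refine Finset.sum_eq_zero fun k _ => ?_
    rw [Measure.smul_apply, smul_eq_mul,
      Measure.dirac_apply' _ ((Set.finite_range x).measurableSet.compl)]
    have : x k ∉ (Set.range x)ᶜ := fun h => h ⟨k, rfl⟩
    simp [Set.indicator_of_notMem this]
  refine ⟨fun a _ _ => key _ (hcompl _), ?_⟩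
  -- Part 2: equality at the Voronoi weights
  -- upper bound via the explicit coupling
  set π : Measure (EuclideanSpace ℝ (Fin d) × EuclideanSpace ℝ (Fin d)) :=
    ∑ k, (μ.restrict (U k)).map (fun y => (y, x k)) with hπ
  have hmk : ∀ k : Fin K, Measurable (fun y : EuclideanSpace ℝ (Fin d) => (y, x k)) :=
    fun k => measurable_id.prodMk measurable_const
  have h1 : π.map Prod.fst = μ := by
    rw [hπ, Stmt3Aux.map_finset_sum measurable_fst]
    have : ∀ k : Fin K, ((μ.restrict (U k)).map (fun y => (y, x k))).map Prod.fst
        = μ.restrict (U k) := by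
      intro k
      rw [Measure.map_map measurable_fst (hmk k)]
      simp [Function.comp_def]
    simp_rw [this]
    exact hsum_restrict
  have h2 : π.map Prod.snd = ∑ k, μ (U k) • Measure.dirac (x k) := by
    rw [hπ, Stmt3Aux.map_finset_sum measurable_snd]
    congr 1
    funext k
    rw [Measure.map_map measurable_snd (hmk k)]
    have : (Prod.snd ∘ fun y : EuclideanSpace ℝ (Fin d) => (y, x k))
        = fun _ => x k := rfl
    rw [this, Measure.map_const]
    simp
  have hub : W2sq μ (∑ k, μ (U k) • Measure.dirac (x k)) ≤
      ∫⁻ y, ⨅ k, ENNReal.ofReal (‖x k - y‖ ^ 2) ∂μ := by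
    have hcost : (∫⁻ p, ENNReal.ofReal (dist p.1 p.2 ^ 2) ∂π)
        = ∫⁻ y, ⨅ k, ENNReal.ofReal (‖x k - y‖ ^ 2) ∂μ := by
      rw [hπ, lintegral_finset_sum_measure]
      have hterm : ∀ k : Fin K,
          (∫⁻ p, ENNReal.ofReal (dist p.1 p.2 ^ 2)
            ∂((μ.restrict (U k)).map (fun y => (y, x k))))
          = ∫⁻ y, ⨅ j, ENNReal.ofReal (‖x j - y‖ ^ 2) ∂(μ.restrict (U k)) := by
        intro k
        rw [lintegral_map cost_meas (hmk k)]
        refine setLIntegral_congr_fun (hUmeas k) ?_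
        intro y hy
        have hk : ∀ j, ‖x k - y‖ ≤ ‖x j - y‖ := hUvor k y hy
        have : (⨅ j, ENNReal.ofReal (‖x j - y‖ ^ 2))
            = ENNReal.ofReal (‖x k - y‖ ^ 2) := by
          refine le_antisymm (iInf_le _ k) (le_iInf fun j => ?_)
          exact ENNReal.ofReal_le_ofReal
            (by have := hk j; nlinarith [norm_nonneg (x k - y), norm_nonneg (x j - y)])
        dsimp only
        rw [dist_eq_norm, norm_sub_rev, this]
      simp_rw [hterm]
      rw [← lintegral_finset_sum_measure, hsum_restrict]
    calc W2sq μ (∑ k, μ (U k) • Measure.dirac (x k))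
        ≤ ∫⁻ p, ENNReal.ofReal (dist p.1 p.2 ^ 2) ∂π :=
          iInf_le _ (⟨π, h1, h2⟩ : {π' // π'.map Prod.fst = μ ∧
            π'.map Prod.snd = ∑ k, μ (U k) • Measure.dirac (x k)})
      _ = _ := hcost
  exact le_antisymm hub (key _ (by
    have := hcompl (fun k => μ (U k))
    simpa using this))
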